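/- arXiv:2402.15467 — 5 statements merged into one kernel-verified Lean document; each statement's English description precedes it below -/
import Mathlib

section
/- Let g(s) = s^γ + α·s^β with α ≥ 0 and 0 ≤ β ≤ 1, 0 ≤ γ ≤ 1. Then for all s > 0, the inequality 0 ≤ 2s·g'(s)² − s·g''(s)·g(s) ≤ 2·g'(s)·g(s) holds, where g'(s) = γ s^{γ−1} + αβ s^{β−1} and g''(s) = γ(γ−1) s^{γ−2} + αβ(β−1) s^{β−2}. -/
theorem stmt_4 (α β γ : ℝ) (hα : 0 ≤ α)
    (hβ0 : 0 ≤ β) (hβ1 : β ≤ 1) (hγ0 : 0 ≤ γ) (hγ1 : γ ≤ 1)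
    (s : ℝ) (hs : 0 < s) :
    0 ≤ 2 * s * (γ * s ^ (γ - 1) + α * β * s ^ (β - 1)) ^ 2
        - s * (γ * (γ - 1) * s ^ (γ - 2) + α * β * (β - 1) * s ^ (β - 2))
            * (s ^ γ + α * s ^ β) ∧
    2 * s * (γ * s ^ (γ - 1) + α * β * s ^ (β - 1)) ^ 2
        - s * (γ * (γ - 1) * s ^ (γ - 2) + α * β * (β - 1) * s ^ (β - 2))
            * (s ^ γ + α * s ^ β)
      ≤ 2 * (γ * s ^ (γ - 1) + α * β * s ^ (β - 1)) * (s ^ γ + α * s ^ β) := by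
  have hγ2 : s ^ (γ - 2) = s ^ γ / s / s := by
    rw [show γ - 2 = γ - 1 - 1 by ring, Real.rpow_sub hs, Real.rpow_sub hs,
      Real.rpow_one]
  have hγ1' : s ^ (γ - 1) = s ^ γ / s := by rw [Real.rpow_sub hs, Real.rpow_one]
  have hβ2 : s ^ (β - 2) = s ^ β / s / s := by
    rw [show β - 2 = β - 1 - 1 by ring, Real.rpow_sub hs, Real.rpow_sub hs,
      Real.rpow_one]
  have hβ1' : s ^ (β - 1) = s ^ β / s := by rw [Real.rpow_sub hs, Real.rpow_one]
  rw [hγ2, hγ1', hβ2, hβ1']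
  set a := s ^ γ with ha'
  set b := s ^ β with hb'
  have ha : 0 < a := Real.rpow_pos_of_pos hs γ
  have hb : 0 < b := Real.rpow_pos_of_pos hs β
  have hs' : s ≠ 0 := ne_of_gt hs
  constructor
  · 
    have key : 0 ≤ (γ * (γ + 1)) * a ^ 2 + (α ^ 2 * (β * (β + 1))) * b ^ 2
        + (α * (γ * (1 - γ) + β * (1 - β) + 4 * γ * β)) * (a * b) := by
      have c1 : 0 ≤ γ * (γ + 1) := by nlinarith
      have c2 : 0 ≤ α ^ 2 * (β * (β + 1)) := by positivity
      have c3 : 0 ≤ α * (γ * (1 - γ) + β * (1 - β) + 4 * γ * β) :=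
        mul_nonneg hα (by nlinarith)
      have := mul_nonneg c3 (le_of_lt (mul_pos ha hb))
      nlinarith [sq_nonneg a, sq_nonneg b, mul_nonneg c1 (sq_nonneg a),
        mul_nonneg c2 (sq_nonneg b)]
    have hgoal : 2 * s * (γ * (a / s) + α * β * (b / s)) ^ 2
        - s * (γ * (γ - 1) * (a / s / s) + α * β * (β - 1) * (b / s / s))
          * (a + α * b)
        = ((γ * (γ + 1)) * a ^ 2 + (α ^ 2 * (β * (β + 1))) * b ^ 2
            + (α * (γ * (1 - γ) + β * (1 - β) + 4 * γ * β)) * (a * b)) / s := by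
      field_simp
      ring
    rw [hgoal]
    positivity
  · rw [← sub_nonneg]
    have key : 0 ≤ (γ * (1 - γ)) * a ^ 2 + (α ^ 2 * (β * (1 - β))) * b ^ 2
        + (α * ((γ - β) ^ 2 + γ * (1 - β) + β * (1 - γ))) * (a * b) := by
      have c1 : 0 ≤ γ * (1 - γ) := by nlinarith
      have c2 : 0 ≤ α ^ 2 * (β * (1 - β)) := by exact mul_nonneg (sq_nonneg α) (by nlinarith)
      have c3 : 0 ≤ α * ((γ - β) ^ 2 + γ * (1 - β) + β * (1 - γ)) := by
        apply mul_nonneg hα; nlinarith [sq_nonneg (γ - β)]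
      have := mul_nonneg c3 (le_of_lt (mul_pos ha hb))
      nlinarith [mul_nonneg c1 (sq_nonneg a), mul_nonneg c2 (sq_nonneg b)]
    have hgoal : 2 * (γ * (a / s) + α * β * (b / s)) * (a + α * b)
        - (2 * s * (γ * (a / s) + α * β * (b / s)) ^ 2
          - s * (γ * (γ - 1) * (a / s / s) + α * β * (β - 1) * (b / s / s))
            * (a + α * b))
        = ((γ * (1 - γ)) * a ^ 2 + (α ^ 2 * (β * (1 - β))) * b ^ 2
            + (α * ((γ - β) ^ 2 + γ * (1 - β) + β * (1 - γ))) * (a * b)) / s := by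
      field_simp
      ring
    rw [hgoal]
    positivity
end

section
/- Let α ≥ 0 and β, γ ∈ [0,1]. Then for all s > 0: γ(γ−1) s^{2γ−2} + α²β(β−1) s^{2β−2} + α(4βγ − β² − β − γ² − γ) s^{γ+β−2} ≤ 0. -/
theorem stmt_6 (α β γ : ℝ) (hα : 0 ≤ α)
    (hβ0 : 0 ≤ β) (hβ1 : β ≤ 1) (hγ0 : 0 ≤ γ) (hγ1 : γ ≤ 1)
    (s : ℝ) (hs : 0 < s) :
    γ * (γ - 1) * s ^ (2 * γ - 2) + α ^ 2 * β * (β - 1) * s ^ (2 * β - 2)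
      + α * (4 * β * γ - β ^ 2 - β - γ ^ 2 - γ) * s ^ (γ + β - 2) ≤ 0 := by
  have p1 : (0:ℝ) < s ^ (2 * γ - 2) := Real.rpow_pos_of_pos hs _
  have p2 : (0:ℝ) < s ^ (2 * β - 2) := Real.rpow_pos_of_pos hs _
  have p3 : (0:ℝ) < s ^ (γ + β - 2) := Real.rpow_pos_of_pos hs _
  have c1 : γ * (γ - 1) ≤ 0 := mul_nonpos_of_nonneg_of_nonpos hγ0 (by linarith)
  have c2 : α ^ 2 * β * (β - 1) ≤ 0 := by nlinarith [sq_nonneg α, mul_nonpos_of_nonneg_of_nonpos hβ0 (show β - 1 ≤ 0 by linarith)]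
  have c3 : α * (4 * β * γ - β ^ 2 - β - γ ^ 2 - γ) ≤ 0 := by
    have : 4 * β * γ - β ^ 2 - β - γ ^ 2 - γ ≤ 0 := by
      nlinarith [sq_nonneg (β - γ), mul_nonneg (mul_nonneg hβ0 hγ0) hγ0]
    exact mul_nonpos_of_nonneg_of_nonpos hα this
  have t1 := mul_nonpos_of_nonpos_of_nonneg c1 p1.le
  have t2 := mul_nonpos_of_nonpos_of_nonneg c2 p2.le
  have t3 := mul_nonpos_of_nonpos_of_nonneg c3 p3.le
  linarith
end

section
/- For constants α ≥ 0, B > 0 and β, γ ∈ [0,1], the function h₂(x) = x²(γ(B+x)^{γ−1} + αβ(B+x)^{β−1}) / ((B+x)^γ + α(B+x)^β)² is increasing (non-decreasing) on the set {x > max(0, 1−B)}. -/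
set_option maxHeartbeats 1000000 in
theorem stmt_9 (α B β γ : ℝ) (hα : 0 ≤ α) (hB : 0 < B)
    (hβ0 : 0 ≤ β) (hβ1 : β ≤ 1) (hγ0 : 0 ≤ γ) (hγ1 : γ ≤ 1) :
    MonotoneOn
      (fun x : ℝ =>
        x ^ 2 * (γ * (B + x) ^ (γ - 1) + α * β * (B + x) ^ (β - 1))
          / ((B + x) ^ γ + α * (B + x) ^ β) ^ 2)
      (Set.Ioi (max 0 (1 - B))) := by
  set m := max 0 (1 - B) with hm
  have key : ∀ x ∈ Set.Ioi m, HasDerivAt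
      (fun x : ℝ =>
        x ^ 2 * (γ * (B + x) ^ (γ - 1) + α * β * (B + x) ^ (β - 1))
          / ((B + x) ^ γ + α * (B + x) ^ β) ^ 2)
      (((2 * x ^ 1 * (γ * (B + x) ^ (γ - 1) + α * β * (B + x) ^ (β - 1))
          + x ^ 2 * (γ * (1 * (γ - 1) * (B + x) ^ (γ - 1 - 1))
              + α * β * (1 * (β - 1) * (B + x) ^ (β - 1 - 1))))
          * ((B + x) ^ γ + α * (B + x) ^ β) ^ 2
        - x ^ 2 * (γ * (B + x) ^ (γ - 1) + α * β * (B + x) ^ (β - 1))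
          * (2 * ((B + x) ^ γ + α * (B + x) ^ β) ^ 1
              * (1 * γ * (B + x) ^ (γ - 1) + α * (1 * β * (B + x) ^ (β - 1)))))
        / (((B + x) ^ γ + α * (B + x) ^ β) ^ 2) ^ 2) x ∧
      (0:ℝ) < B + x ∧ (0:ℝ) < x := by
    intro x hx
    have hx0 : 0 < x := lt_of_le_of_lt (le_max_left _ _) hx
    have ht : (0:ℝ) < B + x := by
      have := lt_of_le_of_lt (le_max_right 0 (1 - B)) hx
      linarith
    have hBx : HasDerivAt (fun x : ℝ => B + x) 1 x := by
      simpa using (hasDerivAt_id x).const_add B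
    have hne : (B + x) ≠ 0 := ne_of_gt ht
    have h1 : HasDerivAt (fun x : ℝ => (B + x) ^ (γ - 1))
        (1 * (γ - 1) * (B + x) ^ (γ - 1 - 1)) x := hBx.rpow_const (Or.inl hne)
    have h2 : HasDerivAt (fun x : ℝ => (B + x) ^ (β - 1))
        (1 * (β - 1) * (B + x) ^ (β - 1 - 1)) x := hBx.rpow_const (Or.inl hne)
    have h3 : HasDerivAt (fun x : ℝ => (B + x) ^ γ)
        (1 * γ * (B + x) ^ (γ - 1)) x := hBx.rpow_const (Or.inl hne)
    have h4 : HasDerivAt (fun x : ℝ => (B + x) ^ β)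
        (1 * β * (B + x) ^ (β - 1)) x := hBx.rpow_const (Or.inl hne)
    have hN : HasDerivAt (fun x : ℝ => γ * (B + x) ^ (γ - 1) + α * β * (B + x) ^ (β - 1))
        (γ * (1 * (γ - 1) * (B + x) ^ (γ - 1 - 1))
          + α * β * (1 * (β - 1) * (B + x) ^ (β - 1 - 1))) x :=
      (h1.const_mul γ).add (h2.const_mul (α * β))
    have hu : HasDerivAt (fun x : ℝ => x ^ 2 * (γ * (B + x) ^ (γ - 1) + α * β * (B + x) ^ (β - 1)))
        ((2 * x ^ 1) * (γ * (B + x) ^ (γ - 1) + α * β * (B + x) ^ (β - 1))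
          + x ^ 2 * (γ * (1 * (γ - 1) * (B + x) ^ (γ - 1 - 1))
              + α * β * (1 * (β - 1) * (B + x) ^ (β - 1 - 1)))) x := by
      simpa using (hasDerivAt_pow 2 x).fun_mul hN
    have hf : HasDerivAt (fun x : ℝ => (B + x) ^ γ + α * (B + x) ^ β)
        (1 * γ * (B + x) ^ (γ - 1) + α * (1 * β * (B + x) ^ (β - 1))) x :=
      h3.add (h4.const_mul α)
    have hv : HasDerivAt (fun x : ℝ => ((B + x) ^ γ + α * (B + x) ^ β) ^ 2)
        (2 * ((B + x) ^ γ + α * (B + x) ^ β) ^ 1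
          * (1 * γ * (B + x) ^ (γ - 1) + α * (1 * β * (B + x) ^ (β - 1)))) x := by
      simpa using hf.fun_pow 2
    have hfpos : 0 < (B + x) ^ γ + α * (B + x) ^ β := by
      have := Real.rpow_pos_of_pos ht γ
      have h' : 0 ≤ α * (B + x) ^ β := mul_nonneg hα (Real.rpow_pos_of_pos ht β).le
      linarith
    have hvne : ((B + x) ^ γ + α * (B + x) ^ β) ^ 2 ≠ 0 := pow_ne_zero _ (ne_of_gt hfpos)
    refine ⟨?_, ht, hx0⟩
    have := hu.fun_div hv hvne
    convert this using 2
  refine monotoneOn_of_deriv_nonneg (convex_Ioi m) ?_ ?_ ?_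
  · intro x hx
    exact ((key x hx).1.differentiableAt).continuousAt.continuousWithinAt
  · rw [interior_Ioi]
    intro x hx
    exact ((key x hx).1.differentiableAt).differentiableWithinAt
  · rw [interior_Ioi]
    intro x hx
    obtain ⟨hd, ht, hx0⟩ := key x hx
    rw [hd.deriv]
    clear hd key
    have e3 : (B + x) ^ γ = (B + x) ^ (γ - 1) * (B + x) := by
      have h := Real.rpow_add ht (γ - 1) 1
      rw [Real.rpow_one, show γ - 1 + 1 = γ by ring] at h
      exact h
    have e4 : (B + x) ^ β = (B + x) ^ (β - 1) * (B + x) := by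
      have h := Real.rpow_add ht (β - 1) 1
      rw [Real.rpow_one, show β - 1 + 1 = β by ring] at h
      exact h
    have e1 : (B + x) ^ (γ - 1) = (B + x) ^ (γ - 2) * (B + x) := by
      have h := Real.rpow_add ht (γ - 2) 1
      rw [Real.rpow_one] at h
      rw [show γ - 1 = γ - 2 + 1 by ring]; exact h
    have e2 : (B + x) ^ (β - 1) = (B + x) ^ (β - 2) * (B + x) := by
      have h := Real.rpow_add ht (β - 2) 1
      rw [Real.rpow_one] at h
      rw [show β - 1 = β - 2 + 1 by ring]; exact h
    have e5 : (B + x) ^ (γ - 1 - 1) = (B + x) ^ (γ - 2) := by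
      rw [show γ - 1 - 1 = γ - 2 by ring]
    have e6 : (B + x) ^ (β - 1 - 1) = (B + x) ^ (β - 2) := by
      rw [show β - 1 - 1 = β - 2 by ring]
    rw [e3, e4, e5, e6, e1, e2]
    have hPpos : 0 < (B + x) ^ (γ - 2) := Real.rpow_pos_of_pos ht _
    have hQpos : 0 < (B + x) ^ (β - 2) := Real.rpow_pos_of_pos ht _
    generalize hPd : (B + x) ^ (γ - 2) = P at *
    generalize hQd : (B + x) ^ (β - 2) = Q at *
    apply div_nonneg _ (by positivity)
    have hid : (2 * x ^ 1 * (γ * (P * (B + x)) + α * β * (Q * (B + x)))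
          + x ^ 2 * (γ * (1 * (γ - 1) * P) + α * β * (1 * (β - 1) * Q)))
          * (P * (B + x) * (B + x) + α * (Q * (B + x) * (B + x))) ^ 2
        - x ^ 2 * (γ * (P * (B + x)) + α * β * (Q * (B + x)))
          * (2 * (P * (B + x) * (B + x) + α * (Q * (B + x) * (B + x))) ^ 1
              * (1 * γ * (P * (B + x)) + α * (1 * β * (Q * (B + x)))))
        = (P * (B + x) * (B + x) + α * (Q * (B + x) * (B + x)))
          * ((B + x) ^ 2 * x *
            (γ * P ^ 2 * (2 * B + (1 - γ) * x)
             + α * P * Q * (2 * (γ + β) * B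
                 + ((β - γ) ^ 2 + β * (1 - γ) + γ * (1 - β)) * x)
             + α ^ 2 * β * Q ^ 2 * (2 * B + (1 - β) * x))) := by ring
    rw [hid]
    have hq : 0 ≤ (β - γ) ^ 2 + β * (1 - γ) + γ * (1 - β) := by nlinarith
    have hfpos : (0:ℝ) ≤ P * (B + x) * (B + x) + α * (Q * (B + x) * (B + x)) := by positivity
    have h1 : 0 ≤ γ * P ^ 2 * (2 * B + (1 - γ) * x) := by
      apply mul_nonneg (by positivity); nlinarith
    have h2 : 0 ≤ α * P * Q * (2 * (γ + β) * B
        + ((β - γ) ^ 2 + β * (1 - γ) + γ * (1 - β)) * x) := by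
      apply mul_nonneg (by positivity); nlinarith
    have h3 : 0 ≤ α ^ 2 * β * Q ^ 2 * (2 * B + (1 - β) * x) := by
      apply mul_nonneg (by positivity); nlinarith
    have hx2 : (0:ℝ) ≤ (B + x) ^ 2 * x := by positivity
    exact mul_nonneg hfpos (mul_nonneg hx2 (by linarith))
end

section
/- Suppose x = (x₁,...,x_n) ∈ (0,∞)^n, s = ∑_i x_i, and for each i the first-order condition μ/(s^γ + α s^β) − μ x_i(γ s^{γ−1} + αβ s^{β−1})/(s^γ + α s^β)² − c_i ρ x_i^{ρ−1} = 0 holds, where 0 < c₁ ≤ ... ≤ c_n, μ, α ≥ 0, 0 ≤ β ≤ γ ≤ 1, ρ > 1. Then x₁ ≥ x₂ ≥ ... ≥ x_n. -/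
open Finset

theorem stmt_12 (n : ℕ) (μ α β γ ρ : ℝ) (c x : Fin n → ℝ)
    (hμ : 0 < μ) (hα : 0 ≤ α) (hβ0 : 0 ≤ β) (hβγ : β ≤ γ) (hγ1 : γ ≤ 1) (hρ : 1 < ρ)
    (hc0 : ∀ i, 0 < c i) (hc : Monotone c)
    (hx : ∀ i, 0 < x i)
    (s : ℝ) (hs : s = ∑ i, x i)
    (hfoc : ∀ i, μ / (s ^ γ + α * s ^ β)
        - μ * x i * (γ * s ^ (γ - 1) + α * β * s ^ (β - 1)) / (s ^ γ + α * s ^ β) ^ 2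
        - c i * ρ * (x i) ^ (ρ - 1) = 0) :
    ∀ i j : Fin n, i ≤ j → x j ≤ x i := by
  intro i j hij
  by_contra hlt
  push_neg at hlt
  have hs0 : 0 < s := by
    rw [hs]
    exact Finset.sum_pos (fun k _ => hx k) ⟨i, Finset.mem_univ i⟩
  have hγ0 : 0 ≤ γ := le_trans hβ0 hβγ
  have hK : 0 ≤ γ * s ^ (γ - 1) + α * β * s ^ (β - 1) := by
    have h1 : 0 < s ^ (γ - 1) := Real.rpow_pos_of_pos hs0 _
    have h2 : 0 < s ^ (β - 1) := Real.rpow_pos_of_pos hs0 _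
    positivity
  have hD2 : (0:ℝ) < (s ^ γ + α * s ^ β) ^ 2 := by
    have h1 : 0 < s ^ γ := Real.rpow_pos_of_pos hs0 _
    have h2 : 0 < s ^ β := Real.rpow_pos_of_pos hs0 _
    positivity
  have heq : c i * ρ * (x i) ^ (ρ - 1)
      + μ * x i * (γ * s ^ (γ - 1) + α * β * s ^ (β - 1)) / (s ^ γ + α * s ^ β) ^ 2
      = c j * ρ * (x j) ^ (ρ - 1)
      + μ * x j * (γ * s ^ (γ - 1) + α * β * s ^ (β - 1)) / (s ^ γ + α * s ^ β) ^ 2 := by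
    have h1 := hfoc i
    have h2 := hfoc j
    linarith
  have hpow : (x i) ^ (ρ - 1) < (x j) ^ (ρ - 1) :=
    Real.rpow_lt_rpow (le_of_lt (hx i)) hlt (by linarith)
  have hpow0 : 0 < (x i) ^ (ρ - 1) := Real.rpow_pos_of_pos (hx i) _
  have hcij : c i ≤ c j := hc hij
  have hρ0 : (0:ℝ) < ρ := by linarith
  have ht1 : c i * ρ * (x i) ^ (ρ - 1) < c j * ρ * (x j) ^ (ρ - 1) := by
    have h1 := mul_lt_mul_of_pos_left hpow (mul_pos (hc0 i) hρ0)
    have h2 := mul_le_mul_of_nonneg_right (mul_le_mul_of_nonneg_right hcij hρ0.le)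
      (le_of_lt (Real.rpow_pos_of_pos (hx j) (ρ - 1)))
    calc c i * ρ * (x i) ^ (ρ - 1) < c i * ρ * (x j) ^ (ρ - 1) := h1
      _ ≤ c j * ρ * (x j) ^ (ρ - 1) := h2
  have ht2 : μ * x i * (γ * s ^ (γ - 1) + α * β * s ^ (β - 1)) / (s ^ γ + α * s ^ β) ^ 2
      ≤ μ * x j * (γ * s ^ (γ - 1) + α * β * s ^ (β - 1)) / (s ^ γ + α * s ^ β) ^ 2 := by
    gcongr
  linarith
end

section
/- Suppose x ∈ (0,∞)^n satisfies the first-order equilibrium conditions with 0 < c₁ ≤ ... ≤ c_n, μ > 0, α ≥ 0, 0 ≤ β ≤ γ ≤ 1, ρ ≥ 1, s = ∑_i x_i. If x_i ≥ x_j for some i, j, then u_i(x) ≥ u_j(x), where u_k(x) = μ x_k/(s^γ + α s^β) − c_k x_k^ρ. -/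
open Finset

theorem stmt_14 (n : ℕ) (μ α β γ ρ : ℝ) (c x : Fin n → ℝ)
    (hμ : 0 < μ) (hα : 0 ≤ α) (hβ0 : 0 ≤ β) (hβγ : β ≤ γ) (hγ1 : γ ≤ 1) (hρ : 1 ≤ ρ)
    (hc0 : ∀ k, 0 < c k) (hc : Monotone c)
    (hx : ∀ k, 0 < x k)
    (s : ℝ) (hs : s = ∑ k, x k) (hspos : 0 < s)
    (hfoc : ∀ k, μ / (s ^ γ + α * s ^ β)
        - μ * x k * (γ * s ^ (γ - 1) + α * β * s ^ (β - 1)) / (s ^ γ + α * s ^ β) ^ 2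
        = c k * ρ * (x k) ^ (ρ - 1))
    (i j : Fin n) (hij : x i ≥ x j) :
    μ * x i / (s ^ γ + α * s ^ β) - c i * (x i) ^ ρ
      ≥ μ * x j / (s ^ γ + α * s ^ β) - c j * (x j) ^ ρ := by
  set D : ℝ := s ^ γ + α * s ^ β with hD
  set E : ℝ := γ * s ^ (γ - 1) + α * β * s ^ (β - 1) with hE
  have hρ0 : (0:ℝ) < ρ := lt_of_lt_of_le one_pos hρ
  have hDpos : 0 < D := by
    have h1 : 0 < s ^ γ := Real.rpow_pos_of_pos hspos γ
    have h2 : 0 ≤ α * s ^ β := mul_nonneg hα (Real.rpow_pos_of_pos hspos β).le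
    linarith
  have hγ0 : 0 ≤ γ := le_trans hβ0 hβγ
  have hEnn : 0 ≤ E := by
    have h1 : 0 ≤ γ * s ^ (γ - 1) :=
      mul_nonneg hγ0 (Real.rpow_pos_of_pos hspos _).le
    have h2 : 0 ≤ α * β * s ^ (β - 1) :=
      mul_nonneg (mul_nonneg hα hβ0) (Real.rpow_pos_of_pos hspos _).le
    linarith
  have key : ∀ k, c k * (x k) ^ ρ = (μ / D - μ * x k * E / D ^ 2) * x k / ρ := by
    intro k
    have hxρ : (x k) ^ ρ = (x k) ^ (ρ - 1) * x k := by
      rw [← Real.rpow_add_one (hx k).ne' (ρ - 1)]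
      norm_num
    rw [hfoc k, hxρ]
    field_simp
  rw [key i, key j]
  have hA : 0 < μ / D := div_pos hμ hDpos
  have hB : 0 ≤ μ * E / D ^ 2 :=
    div_nonneg (mul_nonneg hμ.le hEnn) (by positivity)
  have hbi : μ * x i * E / D ^ 2 = (μ * E / D ^ 2) * x i := by ring
  have hbj : μ * x j * E / D ^ 2 = (μ * E / D ^ 2) * x j := by ring
  have hai : μ * x i / D = (μ / D) * x i := by ring
  have haj : μ * x j / D = (μ / D) * x j := by ring
  rw [hbi, hbj, hai, haj]
  set a := μ / D
  set b := μ * E / D ^ 2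
  have hr1 : ρ⁻¹ ≤ 1 := by
    rw [inv_le_one₀ hρ0]; exact hρ
  have hr0 : 0 < ρ⁻¹ := inv_pos.mpr hρ0
  have hdiv : ∀ t : ℝ, t / ρ = t * ρ⁻¹ := fun t => div_eq_mul_inv t ρ
  rw [hdiv, hdiv]
  have hxj := hx j
  nlinarith [mul_nonneg (mul_nonneg hA.le (sub_nonneg.mpr hr1)) (sub_nonneg.mpr hij),
    mul_nonneg (mul_nonneg hB hr0.le)
      (mul_nonneg (sub_nonneg.mpr hij) (by linarith : (0:ℝ) ≤ x i + x j))]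
end
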